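/- If a cubic multipole with m semiedges admits a Tait coloring (proper 3-edge-coloring including semiedges) in which m_i semiedges receive color i for i=1,2,3, then m_1 ≡ m_2 ≡ m_3 ≡ m (mod 2). -/

import Mathlib

/-- A (cubic) multipole: finitely many vertices `V`, internal edges `E` (with ordered
endpoints `ends`), semiedges `S` each incident to a vertex via `vinc`, and free edges `F`
(isolated edges consisting of two paired semiedges). -/
structure Multipole where
  V : Type
  E : Type
  S : Type
  F : Type
  [fV : Fintype V]
  [fE : Fintype E]
  [fS : Fintype S]
  [fF : Fintype F]
  ends : E → V × V
  vinc : S → V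

namespace Multipole

variable (M : Multipole)

/-- The incidences ("items") at the vertices of a multipole: edge-ends and semiedges. -/
abbrev Item : Type := (M.E × Bool) ⊕ M.S

/-- The vertex at which an item is incident. -/
def itemAt : M.Item → M.V
  | Sum.inl (e, b) => cond b (M.ends e).2 (M.ends e).1
  | Sum.inr s => M.vinc s

/-- The color of an item under an assignment of colors to edges and semiedges. -/
def itemCol (φE : M.E → Fin 3) (φS : M.S → Fin 3) : M.Item → Fin 3
  | Sum.inl (e, _) => φE e
  | Sum.inr s => φS s

/-- A multipole is cubic when every vertex has exactly 3 incidences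
(edge-ends plus semiedges). -/
def IsCubic : Prop := ∀ v : M.V, Nat.card {i : M.Item // M.itemAt i = v} = 3

/-- A Tait coloring: edges and semiedges are colored with 3 colors so that distinct
incidences at a common vertex receive distinct colors. (A free edge carries a single
color, shared by its two semiedges, and imposes no constraint.) -/
def IsTait (φE : M.E → Fin 3) (φS : M.S → Fin 3) : Prop :=
  ∀ i j : M.Item, i ≠ j → M.itemAt i = M.itemAt j →
    M.itemCol φE φS i ≠ M.itemCol φE φS j

/-- The number of semiedges: each free edge contributes two semiedges. -/
noncomputable def numSemiedges : ℕ := Nat.card M.S + 2 * Nat.card M.F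

end Multipole

open Multipole in
/-- **The Parity Lemma.** If a cubic multipole with `m` semiedges admits a Tait coloring
in which `mᵢ` semiedges receive color `i`, then `m₁ ≡ m₂ ≡ m₃ ≡ m (mod 2)`. -/
theorem parity_lemma (M : Multipole) (hcubic : M.IsCubic)
    (φE : M.E → Fin 3) (φS : M.S → Fin 3) (φF : M.F → Fin 3)
    (hTait : M.IsTait φE φS) :
    ∀ c : Fin 3,
      (Nat.card {s : M.S // φS s = c} + 2 * Nat.card {f : M.F // φF f = c}) % 2
        = M.numSemiedges % 2 := by
  intro c
  haveI := M.fV; haveI := M.fE; haveI := M.fS; haveI := M.fF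
  classical
  -- the fiber of items at a vertex
  set Fv : M.V → Finset M.Item := fun v => Finset.univ.filter (fun i => M.itemAt i = v) with hFv
  have hFvcard : ∀ v, (Fv v).card = 3 := by
    intro v
    have := hcubic v
    rwa [Nat.card_eq_fintype_card, Fintype.card_subtype] at this
  -- exactly one item of color c at each vertex
  have hone : ∀ v, ((Fv v).filter (fun i => M.itemCol φE φS i = c)).card = 1 := by
    intro v
    have hinj : Set.InjOn (M.itemCol φE φS) (Fv v) := by
      intro i hi j hj hij
      by_contra hne
      simp only [hFv, Finset.coe_filter, Set.mem_setOf_eq, Finset.mem_univ, true_and] at hi hj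
      exact hTait i j hne (hi.trans hj.symm) hij
    have himg : ((Fv v).image (M.itemCol φE φS)).card = 3 := by
      rw [Finset.card_image_of_injOn hinj, hFvcard]
    have huniv : (Fv v).image (M.itemCol φE φS) = Finset.univ := by
      apply Finset.eq_univ_of_card
      simp [himg]
    have hc : c ∈ (Fv v).image (M.itemCol φE φS) := huniv ▸ Finset.mem_univ c
    obtain ⟨i, hi, hic⟩ := Finset.mem_image.mp hc
    rw [Finset.card_eq_one]
    refine ⟨i, ?_⟩
    ext j
    simp only [Finset.mem_filter, Finset.mem_singleton]
    constructor
    · rintro ⟨hj, hjc⟩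
      exact hinj hj hi (hjc.trans hic.symm)
    · rintro rfl; exact ⟨hi, hic⟩
  -- count of color-c items = |V|
  have hcount : (Finset.univ.filter (fun i : M.Item => M.itemCol φE φS i = c)).card
      = Fintype.card M.V := by
    rw [Finset.card_eq_sum_card_fiberwise (f := M.itemAt) (t := Finset.univ)
      (fun x _ => Finset.mem_univ _)]
    have : ∀ v : M.V,
        ((Finset.univ.filter (fun i : M.Item => M.itemCol φE φS i = c)).filter
          (fun i => M.itemAt i = v)).card = 1 := by
      intro v
      rw [← hone v]
      congr 1
      ext i
      simp [hFv, and_comm]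
    rw [Finset.sum_congr rfl (fun v _ => this v), Finset.sum_const, smul_eq_mul, mul_one,
      Finset.card_univ]
  -- total item count = 3 |V|
  have htot : Fintype.card M.Item = 3 * Fintype.card M.V := by
    have : (Finset.univ : Finset M.Item).card
        = ∑ v : M.V, ((Finset.univ : Finset M.Item).filter (fun i => M.itemAt i = v)).card :=
      Finset.card_eq_sum_card_fiberwise (fun x _ => Finset.mem_univ _)
    change _ = ∑ v : M.V, (Fv v).card at this
    rw [← Finset.card_univ, this, Finset.sum_congr rfl (fun v _ => hFvcard v),
      Finset.sum_const, smul_eq_mul, Finset.card_univ, mul_comm]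
  -- card identities
  have hItem : Fintype.card M.Item = 2 * Fintype.card M.E + Fintype.card M.S := by
    rw [Fintype.card_sum, Fintype.card_prod, Fintype.card_bool]; ring
  have hcolsplit : (Finset.univ.filter (fun i : M.Item => M.itemCol φE φS i = c)).card
      = 2 * Fintype.card {e : M.E // φE e = c} + Fintype.card {s : M.S // φS s = c} := by
    rw [Fintype.card_subtype, Fintype.card_subtype, Finset.card_filter, Finset.card_filter,
      Finset.card_filter, Fintype.sum_sum_type, Fintype.sum_prod_type]
    simp only [Multipole.itemCol]
    have hb : ∀ e : M.E, (∑ _b : Bool, if φE e = c then (1:ℕ) else 0)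
        = 2 * (if φE e = c then 1 else 0) := fun e => by simp [two_mul]
    congr 1; rw [Finset.mul_sum]; exact Finset.sum_congr rfl (fun e _ => hb e)
  have h1 : Nat.card {s : M.S // φS s = c} % 2 = Fintype.card M.V % 2 := by
    rw [Nat.card_eq_fintype_card]
    omega
  have h2 : Nat.card M.S % 2 = Fintype.card M.V % 2 := by
    rw [Nat.card_eq_fintype_card]
    omega
  simp only [Multipole.numSemiedges]
  omega
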